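/- Let F(t;x) ∈ ℚ[x][[t]] be the unique formal power series satisfying F(x) = x + x·t·F(x)·(F(x)−F(1))/(x−1) (the case m=1). Then the specialization f = F(t;1) satisfies the algebraic equation 1 − 16t − (1−20t)f − (3t+8t²)f² − 3t²f³ − t³f⁴ = 0, and admits the rational parametrization t = z(1−z)³, f = (1−2z)/(1−z)³. -/

import Mathlib

open Polynomial PowerSeries

/-- The specialization x := 1 of coefficients, followed by re-inclusion. -/
noncomputable def atOne : PowerSeries (Polynomial ℚ) → PowerSeries (Polynomial ℚ) :=
  PowerSeries.map ((Polynomial.C : ℚ →+* Polynomial ℚ).comp (Polynomial.evalRingHom 1))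

/-- The specialization x := 1, landing in ℚ[[t]]. -/
noncomputable def specOne : PowerSeries (Polynomial ℚ) → PowerSeries ℚ :=
  PowerSeries.map (Polynomial.evalRingHom 1)

section Fix
variable {R : Type*} [CommRing R]

/-- contraction property -/
def Contr (Φ : PowerSeries R → PowerSeries R) : Prop :=
  ∀ (n : ℕ) (A B : PowerSeries R), (∀ k, k < n → PowerSeries.coeff k A = PowerSeries.coeff k B) →
    PowerSeries.coeff n (Φ A) = PowerSeries.coeff n (Φ B)

noncomputable def fixC (Φ : PowerSeries R → PowerSeries R) : ℕ → R
  | n => PowerSeries.coeff n (Φ (PowerSeries.mk fun k => if h : k < n then fixC Φ k else 0))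
termination_by n => n
decreasing_by exact h

theorem fix_isFix (Φ : PowerSeries R → PowerSeries R) (hΦ : Contr Φ) :
    PowerSeries.mk (fixC Φ) = Φ (PowerSeries.mk (fixC Φ)) := by
  ext n
  rw [coeff_mk, fixC]
  exact hΦ n _ _ (fun k hk => by simp [coeff_mk, hk])

theorem fix_unique (Φ : PowerSeries R → PowerSeries R) (hΦ : Contr Φ) {A B : PowerSeries R}
    (hA : A = Φ A) (hB : B = Φ B) : A = B := by
  ext n
  induction n using Nat.strong_induction_on with
  | _ n ih =>
    rw [hA, hB]
    exact hΦ n A B ih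

theorem coeff_mul_eq_zero_of_lt {M P : PowerSeries R} {n : ℕ}
    (hM : ∀ k, k < n → PowerSeries.coeff k M = 0) : ∀ m, m < n → PowerSeries.coeff m (M * P) = 0 := by
  intro m hm
  rw [PowerSeries.coeff_mul]
  exact Finset.sum_eq_zero fun p hp => by
    rw [hM p.1 (lt_of_le_of_lt (le_of_add_le_left (le_of_eq (Finset.HasAntidiagonal.mem_antidiagonal.mp hp))) hm),
      zero_mul]

theorem coeff_mul_eq_zero_of_le {M P : PowerSeries R} {n : ℕ}
    (hM : ∀ k, k < n → PowerSeries.coeff k M = 0) (hP : PowerSeries.constantCoeff P = 0) :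
    PowerSeries.coeff n (M * P) = 0 := by
  rw [PowerSeries.coeff_mul]
  refine Finset.sum_eq_zero fun p hp => ?_
  have hmem := Finset.HasAntidiagonal.mem_antidiagonal.mp hp
  rcases lt_or_ge p.1 n with h | h
  · rw [hM p.1 h, zero_mul]
  · have h1 : p.1 = n := le_antisymm (le_of_add_le_left (le_of_eq hmem)) h
    have h2 : p.2 = 0 := by omega
    rw [h2, coeff_zero_eq_constantCoeff, hP, mul_zero]

/-- the quadratic (Catalan-type) map A ↦ 1 + u A². -/
noncomputable def quadMap (u : PowerSeries R) : PowerSeries R → PowerSeries R :=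
  fun A => 1 + u * A * A

theorem contr_quadMap {u : PowerSeries R} (hu : PowerSeries.constantCoeff u = 0) : Contr (quadMap u) := by
  intro n A B hAB
  have key : quadMap u A - quadMap u B = (A - B) * (u * (A + B)) := by
    unfold quadMap; ring
  have h0 : PowerSeries.coeff n (quadMap u A - quadMap u B) = 0 := by
    rw [key]
    exact coeff_mul_eq_zero_of_le (fun k hk => by rw [map_sub, hAB k hk, sub_self])
      (by simp [map_mul, hu])
  rw [map_sub] at h0
  exact sub_eq_zero.mp h0

/-- the quartic map whose fixpoint is z(t) with z(1-z)³ = t. -/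
noncomputable def quartMap : PowerSeries ℚ → PowerSeries ℚ :=
  fun A => PowerSeries.X + 3 * (A - PowerSeries.C (PowerSeries.constantCoeff A)) ^ 2 - 3 * (A - PowerSeries.C (PowerSeries.constantCoeff A)) ^ 3
    + (A - PowerSeries.C (PowerSeries.constantCoeff A)) ^ 4

theorem contr_quartMap : Contr quartMap := by
  intro n A B hAB
  set Ab := A - PowerSeries.C (PowerSeries.constantCoeff A) with hAbdef
  set Bb := B - PowerSeries.C (PowerSeries.constantCoeff B) with hBbdef
  have hA0 : PowerSeries.constantCoeff Ab = 0 := by simp [hAbdef]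
  have hB0 : PowerSeries.constantCoeff Bb = 0 := by simp [hBbdef]
  have hDlt : ∀ k, k < n → PowerSeries.coeff k (Ab - Bb) = 0 := by
    intro k hk
    rcases Nat.eq_zero_or_pos k with rfl | hkpos
    · rw [coeff_zero_eq_constantCoeff, map_sub, hA0, hB0, sub_self]
    · have : PowerSeries.coeff k (PowerSeries.C (PowerSeries.constantCoeff A)) = PowerSeries.coeff k (PowerSeries.C (PowerSeries.constantCoeff B)) := by
        rw [PowerSeries.coeff_C, PowerSeries.coeff_C]
        simp [Nat.pos_iff_ne_zero.mp hkpos]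
      simp only [hAbdef, hBbdef, map_sub]
      rw [hAB k hk, this]
      ring
  have key : quartMap A - quartMap B
      = (Ab - Bb) * (3 * (Ab + Bb) - 3 * (Ab^2 + Ab*Bb + Bb^2) + (Ab + Bb) * (Ab^2 + Bb^2)) := by
    unfold quartMap
    rw [← hAbdef, ← hBbdef]
    ring
  have h0 : PowerSeries.coeff n (quartMap A - quartMap B) = 0 := by
    rw [key]
    refine coeff_mul_eq_zero_of_le hDlt ?_
    simp [map_add, map_sub, map_mul, map_pow, hA0, hB0]
  rw [map_sub] at h0
  exact sub_eq_zero.mp h0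

end Fix

noncomputable def Z0 : PowerSeries ℚ := PowerSeries.mk (fixC quartMap)

theorem Z0_fix : Z0 = quartMap Z0 := fix_isFix quartMap contr_quartMap

theorem Z0_const : PowerSeries.constantCoeff Z0 = 0 := by
  have h := congrArg (PowerSeries.constantCoeff (R := ℚ)) Z0_fix
  rw [h]
  unfold quartMap
  simp [map_add, map_sub, map_mul, map_pow, constantCoeff_X]

theorem Z0_bar : Z0 - PowerSeries.C (PowerSeries.constantCoeff Z0) = Z0 := by
  rw [Z0_const, map_zero, sub_zero]

theorem Z0_eq : Z0 * (1 - Z0)^3 = PowerSeries.X := by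
  have h := Z0_fix
  unfold quartMap at h
  rw [Z0_bar] at h
  linear_combination h

theorem Z_unique (Z : PowerSeries ℚ) (hZc : PowerSeries.constantCoeff Z = 0)
    (hZX : Z * (1 - Z)^3 = PowerSeries.X) : Z = Z0 := by
  refine fix_unique quartMap contr_quartMap ?_ Z0_fix
  unfold quartMap
  rw [hZc, map_zero, sub_zero]
  linear_combination hZX

/-- Let F(t;x) ∈ ℚ[x][[t]] satisfy the (m=1) Tamari functional equation
F(x) = x + xt·F(x)·(F(x)−F(1))/(x−1) (denominator cleared in `hF`). Then f = F(t;1)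
satisfies 1 − 16t − (1−20t)f − (3t+8t²)f² − 3t²f³ − t³f⁴ = 0, and admits the rational
parametrization t = z(1−z)³, f = (1−2z)/(1−z)³: if Z ∈ ℚ[[t]] has Z(0)=0 and
Z(1−Z)³ = t, then f = (1−2Z)/(1−Z)³. -/
theorem tamari_gf_algebraic (F : PowerSeries (Polynomial ℚ))
    (hF : PowerSeries.C (Polynomial.X - 1) *
            (F - PowerSeries.C Polynomial.X)
        = PowerSeries.C Polynomial.X * PowerSeries.X * F * (F - atOne F)) :
    (1 - 16*PowerSeries.X - (1 - 20*PowerSeries.X) * specOne F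
      - (3*PowerSeries.X + 8*PowerSeries.X^2) * (specOne F)^2
      - 3*PowerSeries.X^2 * (specOne F)^3 - PowerSeries.X^3 * (specOne F)^4 = 0)
    ∧ ∀ Z : PowerSeries ℚ, PowerSeries.constantCoeff Z = 0 →
        Z * (1 - Z)^3 = PowerSeries.X →
        specOne F = (1 - 2*Z) * ((1 - Z)^3)⁻¹ := by
  classical
  set pC : ℚ →+* Polynomial ℚ := (Polynomial.C : ℚ →+* Polynomial ℚ) with hpC
  set e1 : Polynomial ℚ →+* ℚ := Polynomial.evalRingHom 1 with he1
  set Y : PowerSeries (Polynomial ℚ) := PowerSeries.map pC Z0 with hYdef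
  set ξ : PowerSeries (Polynomial ℚ) := PowerSeries.C Polynomial.X with hxidef
  set u : PowerSeries (Polynomial ℚ) := ξ * Y * (1 - Y) with hudef
  set W : PowerSeries (Polynomial ℚ) := PowerSeries.mk (fixC (quadMap u)) with hWdef
  set V : PowerSeries (Polynomial ℚ) := PowerSeries.invOfUnit (1 - Y) 1 with hVdef
  set G : PowerSeries (Polynomial ℚ) := (1 - (1 - ξ*(1-Y))*W)*V^2 with hGdef
  -- basic facts
  have hYc : PowerSeries.constantCoeff Y = 0 := by
    rw [hYdef, ← coeff_zero_eq_constantCoeff, PowerSeries.coeff_map,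
      coeff_zero_eq_constantCoeff, Z0_const, map_zero]
  have hYX : Y * (1-Y)^3 = PowerSeries.X := by
    have h := congrArg (PowerSeries.map pC) Z0_eq
    simpa only [map_mul, map_pow, map_sub, map_one, PowerSeries.map_X] using h
  have hu0 : PowerSeries.constantCoeff u = 0 := by
    rw [hudef]; simp [map_mul, hYc]
  have hW : W = 1 + u*W*W := fix_isFix _ (contr_quadMap hu0)
  have hV : (1-Y)*V = 1 := by
    refine PowerSeries.mul_invOfUnit _ 1 ?_
    simp [map_sub, hYc]
  -- atOne computations
  have haMul : ∀ a b, atOne (a*b) = atOne a * atOne b := fun a b => by simp [atOne, map_mul]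
  have haSub : ∀ a b, atOne (a - b) = atOne a - atOne b := fun a b => by simp [atOne, map_sub]
  have haAdd : ∀ a b, atOne (a + b) = atOne a + atOne b := fun a b => by simp [atOne, map_add]
  have haPow : ∀ a (n : ℕ), atOne (a^n) = (atOne a)^n := fun a n => by simp [atOne, map_pow]
  have haOne : atOne 1 = 1 := by simp [atOne, map_one]
  have haY : atOne Y = Y := by
    ext n
    simp only [atOne, hYdef, PowerSeries.coeff_map, RingHom.comp_apply, hpC, he1,
      Polynomial.coe_evalRingHom, Polynomial.eval_C]
  have haxi : atOne ξ = 1 := by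
    rw [hxidef]
    simp only [atOne, PowerSeries.map_C, RingHom.comp_apply, he1, hpC,
      Polynomial.coe_evalRingHom, Polynomial.eval_X, Polynomial.C_1, map_one]
  have haV : atOne V = V := by
    have h1 : (1-Y) * atOne V = 1 := by
      have := congrArg atOne hV
      rwa [haMul, haSub, haOne, haY] at this
    calc atOne V = ((1-Y)*V) * atOne V := by rw [hV, one_mul]
    _ = ((1-Y) * atOne V) * V := by ring
    _ = V := by rw [h1, one_mul]
  have hv0 : PowerSeries.constantCoeff (Y*(1-Y)) = 0 := by simp [map_mul, hYc]
  have haW : atOne W = V := by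
    refine fix_unique (quadMap (Y*(1-Y))) (contr_quadMap hv0) ?_ ?_
    · have := congrArg atOne hW
      rw [haAdd, haOne, haMul, haMul] at this
      have hau : atOne u = Y*(1-Y) := by
        rw [hudef, haMul, haMul, haxi, haSub, haOne, haY, one_mul]
      rw [hau] at this
      unfold quadMap
      linear_combination this
    · unfold quadMap
      linear_combination (1 - Y*V) * hV
  have haG : atOne G = (1 - Y*V)*V^2 := by
    rw [hGdef, haMul, haSub, haOne, haMul, haSub, haOne, haMul, haSub, haOne, haxi, haY, haW,
      haPow, haV]
    ring
  -- algebraic identities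
  set g : PowerSeries (Polynomial ℚ) := 1 - (1 - ξ*(1-Y))*W with hgdef
  set B : PowerSeries (Polynomial ℚ) := (1 - Y*V)*V^2 with hBdef
  have h1 : (1-Y)^2 * G = g := by
    rw [hGdef, hgdef]
    linear_combination ((1 - (1 - ξ*(1-Y))*W)*((1-Y)*V+1)) * hV
  have h2 : (1-Y)^3 * B = 1 - 2*Y := by
    rw [hBdef]
    linear_combination (1 + V - 2*Y - 3*Y*V - Y*V^2 + 2*Y^2*V + 2*Y^2*V^2 - Y^3*V^2) * hV
  have core : (ξ-1)*(g - ξ*(1-Y)^2) = ξ*Y*g*((1-Y)*g - 1 + 2*Y) := by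
    rw [hgdef]
    linear_combination ((1-ξ*(1-Y))^2) * hW
  have key : (1-Y)^7 * ((ξ-1)*(G - ξ) - ξ*PowerSeries.X*G*(G - B)) = 0 := by
    linear_combination (ξ*G*(G-B)*(1-Y)^7) * hYX
      + ((ξ-1)*(1-Y)^5 - ξ*Y*g*(1-Y)^6 + ξ*Y*(1-Y)^8*(B-G)) * h1
      + (ξ*Y*g*(1-Y)^5) * h2 + ((1-Y)^5) * core
  have hFG : PowerSeries.C (Polynomial.X - 1) * (G - ξ)
      = ξ * PowerSeries.X * G * (G - atOne G) := by
    have hC1 : PowerSeries.C (Polynomial.X - 1) = ξ - 1 := by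
      rw [map_sub, map_one, hxidef]
    rw [hC1, haG]
    have hunit : IsUnit ((1-Y)^7) := (IsUnit.of_mul_eq_one _ hV).pow 7
    obtain ⟨c, hc⟩ := hunit.exists_left_inv
    have := congrArg (c * ·) key
    simp only [mul_zero] at this
    rw [← mul_assoc, hc, one_mul] at this
    linear_combination this
  -- uniqueness: F = G
  have hsub : PowerSeries.C (Polynomial.X - 1) * (F - G)
      = PowerSeries.X * ((F - G) * (ξ*(F + G - atOne F)) - (atOne (F - G)) * (ξ*G)) := by
    rw [haSub F G]
    linear_combination hF - hFG
  have hD : ∀ n, PowerSeries.coeff n (F - G) = 0 := by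
    intro n
    induction n using Nat.strong_induction_on with
    | _ n ih =>
      have h := congrArg (PowerSeries.coeff (R := Polynomial ℚ) n) hsub
      rw [PowerSeries.coeff_C_mul] at h
      have hR : PowerSeries.coeff n (PowerSeries.X *
          ((F - G) * (ξ*(F + G - atOne F)) - (atOne (F - G)) * (ξ*G))) = 0 := by
        cases n with
        | zero =>
          rw [coeff_zero_eq_constantCoeff, map_mul, constantCoeff_X, zero_mul]
        | succ m =>
          rw [PowerSeries.coeff_succ_X_mul, map_sub,
            coeff_mul_eq_zero_of_lt (n := m+1) ih m m.lt_succ_self,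
            coeff_mul_eq_zero_of_lt (n := m+1)
              (fun k hk => by
                have h' := ih k hk
                rw [map_sub, sub_eq_zero] at h'
                simp only [atOne, PowerSeries.coeff_map, map_sub, h', sub_self]) m m.lt_succ_self,
            sub_zero]
      rw [hR] at h
      have hXne : (Polynomial.X - 1 : Polynomial ℚ) ≠ 0 := by
        intro habs
        have := congrArg (Polynomial.eval 0) habs
        simp at this
      exact (mul_eq_zero.mp h).resolve_left hXne
  have hFGeq : F = G := by
    have hz : F - G = 0 := by
      ext n
      rw [hD n, map_zero]
    exact sub_eq_zero.mp hz
  -- specialization at x = 1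
  have hsMul : ∀ a b, specOne (a*b) = specOne a * specOne b := fun a b => by
    simp [specOne, map_mul]
  have hsSub : ∀ a b, specOne (a - b) = specOne a - specOne b := fun a b => by
    simp [specOne, map_sub]
  have hsPow : ∀ a (n : ℕ), specOne (a^n) = (specOne a)^n := fun a n => by
    simp [specOne, map_pow]
  have hsOne : specOne 1 = 1 := by simp [specOne, map_one]
  have hsY : specOne Y = Z0 := by
    ext n
    simp only [specOne, hYdef, PowerSeries.coeff_map, he1, hpC, Polynomial.coe_evalRingHom,
      Polynomial.eval_C]
  have hsAt : ∀ A, specOne (atOne A) = specOne A := fun A => by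
    ext n
    simp only [specOne, atOne, PowerSeries.coeff_map, RingHom.comp_apply,
      Polynomial.coe_evalRingHom, Polynomial.eval_C]
  set Vs : PowerSeries ℚ := specOne V with hVsdef
  have hVs : (1 - Z0) * Vs = 1 := by
    have := congrArg specOne hV
    rwa [hsMul, hsSub, hsOne, hsY] at this
  have hfval : specOne F = (1 - Z0*Vs)*Vs^2 := by
    rw [hFGeq, ← hsAt, haG, hBdef, hsMul, hsSub, hsOne, hsMul, hsY, hsPow]
  have hf3 : (1-Z0)^3 * specOne F = 1 - 2*Z0 := by
    rw [hfval]
    linear_combination (1 + Vs - 2*Z0 - 3*Z0*Vs - Z0*Vs^2 + 2*Z0^2*Vs + 2*Z0^2*Vs^2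
      - Z0^3*Vs^2) * hVs
  have hcan : ∀ c : PowerSeries ℚ, (1-Z0)^12 * c = 0 → c = 0 := by
    intro c hc
    have hv12 : (1-Z0)^12 * Vs^12 = 1 := by
      rw [← mul_pow, hVs, one_pow]
    calc c = ((1-Z0)^12 * Vs^12) * c := by rw [hv12, one_mul]
    _ = Vs^12 * ((1-Z0)^12 * c) := by ring
    _ = 0 := by rw [hc, mul_zero]
  constructor
  · set f : PowerSeries ℚ := specOne F with hfdef
    refine hcan _ ?_
    linear_combination ((16) + (-20)*f + (3)*f^2 + (8)*f^2*(PowerSeries.X : PowerSeries ℚ) + (3)*f^3*(PowerSeries.X : PowerSeries ℚ) + (1)*f^4*(PowerSeries.X : PowerSeries ℚ)^2 + (-192)*Z0 + (240)*Z0*f + (-28)*Z0*f^2 + (-96)*Z0*f^2*(PowerSeries.X : PowerSeries ℚ) + (3)*Z0*f^3 + (-36)*Z0*f^3*(PowerSeries.X : PowerSeries ℚ) + (1)*Z0*f^4*(PowerSeries.X : PowerSeries ℚ) + (-12)*Z0*f^4*(PowerSeries.X : PowerSeries ℚ)^2 + (1056)*Z0^2 + (-1320)*Z0^2*f + (78)*Z0^2*f^2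 + (528)*Z0^2*f^2*(PowerSeries.X : PowerSeries ℚ) + (-45)*Z0^2*f^3 + (198)*Z0^2*f^3*(PowerSeries.X : PowerSeries ℚ) + (1)*Z0^2*f^4 + (-15)*Z0^2*f^4*(PowerSeries.X : PowerSeries ℚ) + (66)*Z0^2*f^4*(PowerSeries.X : PowerSeries ℚ)^2 + (-3520)*Z0^3 + (4400)*Z0^3*f + (180)*Z0^3*f^2 + (-1760)*Z0^3*f^2*(PowerSeries.X : PowerSeries ℚ) + (315)*Z0^3*f^3 + (-660)*Z0^3*f^3*(PowerSeries.X : PowerSeries ℚ) + (-18)*Z0^3*f^4 + (105)*Z0^3*f^4*(PowerSeries.X : PowerSeries ℚ) + (-220)*Z0^3*f^4*(PowerSeries.X : PowerSeries ℚ)^2 + (7920)*Z0^4 + (-9900)*Z0^4*f + (-2155)*Z0^4*f^2 + (3960)*Z0^4*f^2*(PowerSeries.X : PowerSeries ℚ) + (-1365)*Z0^4*f^3 + (1485)*Z0^4*f^3*(PowerSeries.X : PowerSeries ℚ) + (153)*Z0^4*f^4 + (-455)*Z0^4*f^4*(PowerSeries.X : PowerSeries ℚ) + (495)*Z0^4*f^4*(PowerSeries.X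 : PowerSeries ℚ)^2 + (-12672)*Z0^5 + (15840)*Z0^5*f + (8544)*Z0^5*f^2 + (-6336)*Z0^5*f^2*(PowerSeries.X : PowerSeries ℚ) + (4095)*Z0^5*f^3 + (-2376)*Z0^5*f^3*(PowerSeries.X : PowerSeries ℚ) + (-816)*Z0^5*f^4 + (1365)*Z0^5*f^4*(PowerSeries.X : PowerSeries ℚ) + (-792)*Z0^5*f^4*(PowerSeries.X : PowerSeries ℚ)^2 + (14784)*Z0^6 + (-18480)*Z0^6*f + (-21252)*Z0^6*f^2 + (7392)*Z0^6*f^2*(PowerSeries.X : PowerSeries ℚ) + (-9009)*Z0^6*f^3 + (2772)*Z0^6*f^3*(PowerSeries.X : PowerSeries ℚ) + (3060)*Z0^6*f^4 + (-3003)*Z0^6*f^4*(PowerSeries.X : PowerSeries ℚ) + (924)*Z0^6*f^4*(PowerSeries.X : PowerSeries ℚ)^2 + (-12672)*Z0^7 + (15840)*Z0^7*f + (37664)*Z0^7*f^2 + (-6336)*Z0^7*f^2*(PowerSeries.X : PowerSeries ℚ) + (15015)*Z0^7*f^3 + (-2376)*Z0^7*f^3*(PowerSeries.X : PowerSeries ℚ)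 + (-8568)*Z0^7*f^4 + (5005)*Z0^7*f^4*(PowerSeries.X : PowerSeries ℚ) + (-792)*Z0^7*f^4*(PowerSeries.X : PowerSeries ℚ)^2 + (7920)*Z0^8 + (-9900)*Z0^8*f + (-49995)*Z0^8*f^2 + (3960)*Z0^8*f^2*(PowerSeries.X : PowerSeries ℚ) + (-19305)*Z0^8*f^3 + (1485)*Z0^8*f^3*(PowerSeries.X : PowerSeries ℚ) + (18564)*Z0^8*f^4 + (-6435)*Z0^8*f^4*(PowerSeries.X : PowerSeries ℚ) + (495)*Z0^8*f^4*(PowerSeries.X : PowerSeries ℚ)^2 + (-3520)*Z0^9 + (4400)*Z0^9*f + (50820)*Z0^9*f^2 + (-1760)*Z0^9*f^2*(PowerSeries.X : PowerSeries ℚ) + (19305)*Z0^9*f^3 + (-660)*Z0^9*f^3*(PowerSeries.X : PowerSeries ℚ) + (-31824)*Z0^9*f^4 + (6435)*Z0^9*f^4*(PowerSeries.X : PowerSeries ℚ) + (-220)*Z0^9*f^4*(PowerSeries.X : PowerSeries ℚ)^2 + (1056)*Z0^10 + (-1320)*Z0^10*f + (-39842)*Z0^10*f^2 + (528)*Z0^10*f^2*(PowerSeries.X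 : PowerSeries ℚ) + (-15015)*Z0^10*f^3 + (198)*Z0^10*f^3*(PowerSeries.X : PowerSeries ℚ) + (43758)*Z0^10*f^4 + (-5005)*Z0^10*f^4*(PowerSeries.X : PowerSeries ℚ) + (66)*Z0^10*f^4*(PowerSeries.X : PowerSeries ℚ)^2 + (-192)*Z0^11 + (240)*Z0^11*f + (23988)*Z0^11*f^2 + (-96)*Z0^11*f^2*(PowerSeries.X : PowerSeries ℚ) + (9009)*Z0^11*f^3 + (-36)*Z0^11*f^3*(PowerSeries.X : PowerSeries ℚ) + (-48620)*Z0^11*f^4 + (3003)*Z0^11*f^4*(PowerSeries.X : PowerSeries ℚ) + (-12)*Z0^11*f^4*(PowerSeries.X : PowerSeries ℚ)^2 + (16)*Z0^12 + (-20)*Z0^12*f + (-10917)*Z0^12*f^2 + (8)*Z0^12*f^2*(PowerSeries.X : PowerSeries ℚ) + (-4095)*Z0^12*f^3 + (3)*Z0^12*f^3*(PowerSeries.X : PowerSeries ℚ) + (43758)*Z0^12*f^4 + (-1365)*Z0^12*f^4*(PowerSeries.X : PowerSeries ℚ) + (1)*Z0^12*f^4*(PowerSeries.X : PowerSeries ℚ)^2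 + (3640)*Z0^13*f^2 + (1365)*Z0^13*f^3 + (-31824)*Z0^13*f^4 + (455)*Z0^13*f^4*(PowerSeries.X : PowerSeries ℚ) + (-840)*Z0^14*f^2 + (-315)*Z0^14*f^3 + (18564)*Z0^14*f^4 + (-105)*Z0^14*f^4*(PowerSeries.X : PowerSeries ℚ) + (120)*Z0^15*f^2 + (45)*Z0^15*f^3 + (-8568)*Z0^15*f^4 + (15)*Z0^15*f^4*(PowerSeries.X : PowerSeries ℚ) + (-8)*Z0^16*f^2 + (-3)*Z0^16*f^3 + (3060)*Z0^16*f^4 + (-1)*Z0^16*f^4*(PowerSeries.X : PowerSeries ℚ) + (-816)*Z0^17*f^4 + (153)*Z0^18*f^4 + (-18)*Z0^19*f^4 + (1)*Z0^20*f^4) * Z0_eq + ((-1) + (26)*Z0 + (-3)*Z0*f + (-254)*Z0^2 + (25)*Z0^2*f + (-3)*Z0^2*f^2 + (1392)*Z0^3 + (-37)*Z0^3*f + (44)*Z0^3*f^2 + (-1)*Z0^3*f^3 + (-4991)*Z0^4 + (-434)*Z0^4*f + (-298)*Z0^4*f^2 + (18)*Z0^4*f^3 + (12650)*Z0^5 +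 (3093)*Z0^5*f + (1230)*Z0^5*f^2 + (-153)*Z0^5*f^3 + (-23672)*Z0^6 + (-10817)*Z0^6*f + (-3430)*Z0^6*f^2 + (816)*Z0^6*f^3 + (33528)*Z0^7 + (24959)*Z0^7*f + (6734)*Z0^7*f^2 + (-3060)*Z0^7*f^3 + (-36399)*Z0^8 + (-41536)*Z0^8*f + (-9282)*Z0^8*f^2 + (8568)*Z0^8*f^3 + (30382)*Z0^9 + (51843)*Z0^9*f + (8294)*Z0^9*f^2 + (-18564)*Z0^9*f^3 + (-19382)*Z0^10 + (-49401)*Z0^10*f + (-2860)*Z0^10*f^2 + (31824)*Z0^10*f^3 + (9296)*Z0^11 + (36113)*Z0^11*f + (-4290)*Z0^11*f^2 + (-43758)*Z0^11*f^3 + (-3249)*Z0^12 + (-20138)*Z0^12*f + (8866)*Z0^12*f^2 + (48620)*Z0^12*f^3 + (782)*Z0^13 + (8423)*Z0^13*f + (-8918)*Z0^13*f^2 + (-43758)*Z0^13*f^3 + (-116)*Z0^14 + (-2559)*Z0^14*f + (6006)*Z0^14*f^2 + (31824)*Z0^14*f^3 + (8)*Z0^15 + (533)*Z0^15*f + (-2870)*Z0^15*f^2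 + (-18564)*Z0^15*f^3 + (-68)*Z0^16*f + (970)*Z0^16*f^2 + (8568)*Z0^16*f^3 + (4)*Z0^17*f + (-222)*Z0^17*f^2 + (-3060)*Z0^17*f^3 + (31)*Z0^18*f^2 + (816)*Z0^18*f^3 + (-2)*Z0^19*f^2 + (-153)*Z0^19*f^3 + (18)*Z0^20*f^3 + (-1)*Z0^21*f^3) * hf3
  · intro Z hZc hZX
    rw [Z_unique Z hZc hZX]
    have hinv : ((1 - Z0)^3)⁻¹ = Vs^3 := by
      rw [PowerSeries.inv_eq_iff_mul_eq_one (by simp [map_pow, map_sub, Z0_const])]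
      calc Vs^3 * (1-Z0)^3 = ((1-Z0)*Vs)^3 := by ring
      _ = 1 := by rw [hVs, one_pow]
    rw [hfval, hinv]
    linear_combination (-Vs^2) * hVs
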